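/- Let Ψ = Σ_{s=1}^{d} a_s (e_s ⊗ χ_s) ∈ ℂ^d ⊗ ℂ^n be a pure state of full Schmidt rank d, i.e., a_s > 0 for all s, {e_s} is an orthonormal basis of ℂ^d, and {χ_s} is an orthonormal family in ℂ^n. Suppose the rank-one projector |Ψ⟩⟨Ψ| admits a decomposition |Ψ⟩⟨Ψ| = Σ_{α∈A} w_α Q_α ⊗ ρ_α for some finite family of d×d matrices {Q_α}, real weights {w_α}, and n×n matrices {ρ_α}. Then the complex span of the family {w_α ρ_α : α ∈ A} has dimension at least d². In particular, any bath-positive decomposition of a full-Schmidt-rank pure state requires at least d² linearly independent bath operators. -/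

import Mathlib

open Matrix
open scoped Kronecker ComplexOrder ComplexConjugate

noncomputable def bathContract {d n : ℕ} (χ : Fin d → Fin n → ℂ) :
    Matrix (Fin n) (Fin n) ℂ →ₗ[ℂ] Matrix (Fin d) (Fin d) ℂ where
  toFun ρ := Matrix.of fun t t' => ∑ b, ∑ b', conj (χ t b) * ρ b b' * χ t' b'
  map_add' ρ σ := by
    ext t t'
    simp [Matrix.add_apply, mul_add, add_mul, Finset.sum_add_distrib]
  map_smul' c ρ := by
    ext t t'
    simp only [Matrix.smul_apply, smul_eq_mul, RingHom.id_apply, Matrix.of_apply,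
      Finset.mul_sum]
    refine Finset.sum_congr rfl fun b _ => Finset.sum_congr rfl fun b' _ => by ring

/-- Factorization of the contracted Kronecker-product sum. -/
lemma kron_contract_aux {d n : ℕ} (E F : Fin d → ℂ) (X : Matrix (Fin d) (Fin d) ℂ)
    (C D : Fin n → ℂ) (Y : Matrix (Fin n) (Fin n) ℂ) (c : ℂ) :
    ∑ p : Fin d × Fin n, ∑ q : Fin d × Fin n,
      c * ((E p.1 * X p.1 q.1 * F q.1) * (C p.2 * Y p.2 q.2 * D q.2))
    = c * ((∑ i, ∑ j, E i * X i j * F j) * (∑ b, ∑ b', C b * Y b b' * D b')) := by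
  simp only [Fintype.sum_prod_type, Finset.sum_mul, Finset.mul_sum]
  rw [Finset.sum_comm]
  refine Finset.sum_congr rfl fun b _ => ?_
  refine Eq.trans (Finset.sum_congr rfl fun i _ => Finset.sum_comm) ?_
  refine Eq.trans Finset.sum_comm ?_
  refine Finset.sum_congr rfl fun b' _ => Finset.sum_congr rfl fun i _ =>
    Finset.sum_congr rfl fun j _ => by ring

/-- Any decomposition `|Ψ⟩⟨Ψ| = Σ_α w_α Q_α ⊗ ρ_α` of a pure state of full Schmidt rank `d`
requires at least `d²` linearly independent bath operators: the complex span of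
`{w_α ρ_α}` has dimension at least `d²`. -/
theorem schmidt_rank_d_needs_d_sq_bath_operators {d n : ℕ} {A : Type*} [Fintype A]
    (a : Fin d → ℝ) (ha : ∀ s, 0 < a s)
    (e : Fin d → Fin d → ℂ) (χ : Fin d → Fin n → ℂ)
    (he : ∀ s s', ∑ i, conj (e s i) * e s' i = if s = s' then 1 else 0)
    (hχ : ∀ s s', ∑ b, conj (χ s b) * χ s' b = if s = s' then 1 else 0)
    (w : A → ℝ) (Q : A → Matrix (Fin d) (Fin d) ℂ)
    (ρB : A → Matrix (Fin n) (Fin n) ℂ)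
    (hdec : (Matrix.of fun p q : Fin d × Fin n =>
        (∑ s, (a s : ℂ) * e s p.1 * χ s p.2) *
          conj (∑ s, (a s : ℂ) * e s q.1 * χ s q.2))
      = ∑ α, (w α : ℂ) • (Q α ⊗ₖ ρB α)) :
    d ^ 2 ≤ Module.finrank ℂ
      ↥(Submodule.span ℂ (Set.range fun α => (w α : ℂ) • ρB α)) := by
  classical
  set L := bathContract χ with hL
  set S := Submodule.span ℂ (Set.range fun α => (w α : ℂ) • ρB α) with hS
  have hpt : ∀ p q : Fin d × Fin n,
      (∑ s, (a s : ℂ) * e s p.1 * χ s p.2) * conj (∑ s, (a s : ℂ) * e s q.1 * χ s q.2)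
        = ∑ α, (w α : ℂ) * (Q α p.1 q.1 * ρB α p.2 q.2) := by
    intro p q
    have := congrFun (congrFun hdec p) q
    simpa [Matrix.sum_apply, Matrix.smul_apply, Matrix.kroneckerMap_apply, smul_eq_mul,
      mul_assoc] using this
  have h1 : ∀ s t : Fin d,
      (∑ p : Fin d × Fin n, conj (e s p.1) * conj (χ t p.2) *
        (∑ u, (a u : ℂ) * e u p.1 * χ u p.2))
      = if s = t then (a s : ℂ) else 0 := by
    intro s t
    have step : ∀ p : Fin d × Fin n,
        conj (e s p.1) * conj (χ t p.2) * (∑ u, (a u : ℂ) * e u p.1 * χ u p.2)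
        = ∑ u, (a u : ℂ) * ((conj (e s p.1) * e u p.1) * (conj (χ t p.2) * χ u p.2)) := by
      intro p
      rw [Finset.mul_sum]
      exact Finset.sum_congr rfl fun u _ => by ring
    rw [Finset.sum_congr rfl fun p _ => step p, Finset.sum_comm]
    have key : ∀ u : Fin d,
        (∑ p : Fin d × Fin n,
            (a u : ℂ) * ((conj (e s p.1) * e u p.1) * (conj (χ t p.2) * χ u p.2)))
        = (a u : ℂ) * ((if s = u then 1 else 0) * (if t = u then 1 else 0)) := by
      intro u
      rw [← he s u, ← hχ t u, Finset.sum_mul_sum]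
      simp only [Finset.mul_sum, Fintype.sum_prod_type]
    rw [Finset.sum_congr rfl fun u _ => key u]
    rcases eq_or_ne s t with rfl | hst
    · rw [Finset.sum_eq_single s]
      · simp
      · intro u _ hu; simp [Ne.symm hu]
      · simp
    · rw [Finset.sum_eq_zero]
      · simp [hst]
      · intro u _
        rcases eq_or_ne s u with rfl | hsu
        · simp [fun h : t = s => hst h.symm, Ne.symm (by simpa [eq_comm] using hst : s ≠ t)]
        · simp [hsu]
  have h2 : ∀ s' t' : Fin d,
      (∑ q : Fin d × Fin n, conj (∑ u, (a u : ℂ) * e u q.1 * χ u q.2) *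
        (e s' q.1 * χ t' q.2))
      = if s' = t' then (a s' : ℂ) else 0 := by
    intro s' t'
    have step : ∀ q : Fin d × Fin n,
        conj (∑ u, (a u : ℂ) * e u q.1 * χ u q.2) * (e s' q.1 * χ t' q.2)
        = ∑ u, (a u : ℂ) * ((conj (e u q.1) * e s' q.1) * (conj (χ u q.2) * χ t' q.2)) := by
      intro q
      rw [map_sum, Finset.sum_mul]
      refine Finset.sum_congr rfl fun u _ => ?_
      simp only [_root_.map_mul, Complex.conj_ofReal]
      ring
    rw [Finset.sum_congr rfl fun q _ => step q, Finset.sum_comm]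
    have key : ∀ u : Fin d,
        (∑ q : Fin d × Fin n,
            (a u : ℂ) * ((conj (e u q.1) * e s' q.1) * (conj (χ u q.2) * χ t' q.2)))
        = (a u : ℂ) * ((if u = s' then 1 else 0) * (if u = t' then 1 else 0)) := by
      intro u
      rw [← he u s', ← hχ u t', Finset.sum_mul_sum]
      simp only [Finset.mul_sum, Fintype.sum_prod_type]
    rw [Finset.sum_congr rfl fun u _ => key u]
    rcases eq_or_ne s' t' with rfl | hst
    · rw [Finset.sum_eq_single s']
      · simp
      · intro u _ hu; simp [hu]
      · simp
    · rw [Finset.sum_eq_zero]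
      · simp [hst]
      · intro u _
        rcases eq_or_ne u s' with rfl | hus
        · simp [hst]
        · simp [hus]
  -- key contracted identity
  have hkey : ∀ s s' t t' : Fin d,
      ∑ α, (w α : ℂ) * ((∑ i, ∑ j, conj (e s i) * Q α i j * e s' j) *
          (∑ b, ∑ b', conj (χ t b) * ρB α b b' * χ t' b'))
      = (if s = t then (a s : ℂ) else 0) * (if s' = t' then (a s' : ℂ) else 0) := by
    intro s s' t t'
    rw [← h1 s t, ← h2 s' t', Finset.sum_mul_sum]
    have lhs_eq : ∀ p q : Fin d × Fin n,
        (conj (e s p.1) * conj (χ t p.2) * (∑ u, (a u : ℂ) * e u p.1 * χ u p.2)) *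
          (conj (∑ u, (a u : ℂ) * e u q.1 * χ u q.2) * (e s' q.1 * χ t' q.2))
        = ∑ α, (w α : ℂ) *
            ((conj (e s p.1) * Q α p.1 q.1 * e s' q.1) *
             (conj (χ t p.2) * ρB α p.2 q.2 * χ t' q.2)) := by
      intro p q
      have hre : (conj (e s p.1) * conj (χ t p.2) * (∑ u, (a u : ℂ) * e u p.1 * χ u p.2)) *
          (conj (∑ u, (a u : ℂ) * e u q.1 * χ u q.2) * (e s' q.1 * χ t' q.2))
          = (conj (e s p.1) * conj (χ t p.2)) *
            ((∑ u, (a u : ℂ) * e u p.1 * χ u p.2) *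
              conj (∑ u, (a u : ℂ) * e u q.1 * χ u q.2)) *
            (e s' q.1 * χ t' q.2) := by ring
      rw [hre, hpt p q, Finset.mul_sum, Finset.sum_mul]
      exact Finset.sum_congr rfl fun α _ => by ring
    rw [Finset.sum_congr rfl fun p _ => Finset.sum_congr rfl fun q _ => lhs_eq p q]
    have hswap : ∀ g : Fin d × Fin n → Fin d × Fin n → A → ℂ,
        (∑ p, ∑ q, ∑ α, g p q α) = ∑ α, ∑ p, ∑ q, g p q α := by
      intro g
      calc (∑ p, ∑ q, ∑ α, g p q α) = ∑ p, ∑ α, ∑ q, g p q α :=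
            Finset.sum_congr rfl fun p _ => Finset.sum_comm
        _ = ∑ α, ∑ p, ∑ q, g p q α := Finset.sum_comm
    rw [hswap]
    exact Finset.sum_congr rfl fun α _ =>
      (kron_contract_aux (fun i => conj (e s i)) (e s') (Q α)
        (fun b => conj (χ t b)) (χ t') (ρB α) (w α)).symm
  -- every standard basis matrix (scaled) is in the image of the span
  have hmem : ∀ s s' : Fin d,
      Matrix.single s s' ((a s : ℂ) * (a s' : ℂ)) ∈ Submodule.map L S := by
    intro s s'
    refine ⟨∑ α, (∑ i, ∑ j, conj (e s i) * Q α i j * e s' j) • ((w α : ℂ) • ρB α),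
      Submodule.sum_mem _ fun α _ =>
        Submodule.smul_mem _ _ (Submodule.subset_span ⟨α, rfl⟩), ?_⟩
    ext t t'
    rw [map_sum]
    have : ∀ α : A, L ((∑ i, ∑ j, conj (e s i) * Q α i j * e s' j) • ((w α : ℂ) • ρB α)) t t'
        = (w α : ℂ) * ((∑ i, ∑ j, conj (e s i) * Q α i j * e s' j) *
            (∑ b, ∑ b', conj (χ t b) * ρB α b b' * χ t' b')) := by
      intro α
      rw [LinearMap.map_smul, LinearMap.map_smul]
      simp only [Matrix.smul_apply, smul_eq_mul, hL, bathContract, LinearMap.coe_mk,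
        AddHom.coe_mk, Matrix.of_apply]
      ring
    rw [Matrix.sum_apply, Finset.sum_congr rfl fun α _ => this α, hkey s s' t t']
    simp only [Matrix.single, Matrix.of_apply]
    by_cases h1' : s = t <;> by_cases h2' : s' = t' <;> simp [h1', h2']
  -- the image is everything
  have htop : Submodule.map L S = ⊤ := by
    rw [eq_top_iff, ← (Matrix.stdBasis ℂ (Fin d) (Fin d)).span_eq]
    refine Submodule.span_le.mpr ?_
    rintro _ ⟨⟨s, s'⟩, rfl⟩
    rw [Matrix.stdBasis_eq_single]
    have hne : ((a s : ℂ) * (a s' : ℂ)) ≠ 0 :=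
      mul_ne_zero (Complex.ofReal_ne_zero.mpr (ha s).ne')
        (Complex.ofReal_ne_zero.mpr (ha s').ne')
    have : Matrix.single s s' (1 : ℂ)
        = ((a s : ℂ) * (a s' : ℂ))⁻¹ • Matrix.single s s' ((a s : ℂ) * (a s' : ℂ)) := by
      rw [Matrix.smul_single, smul_eq_mul, inv_mul_cancel₀ hne]
    rw [this]
    exact Submodule.smul_mem _ _ (hmem s s')
  have hle : Module.finrank ℂ ↥(Submodule.map L S) ≤ Module.finrank ℂ ↥S :=
    Submodule.finrank_map_le L S
  rw [htop, finrank_top] at hle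
  calc d ^ 2 = Module.finrank ℂ (Matrix (Fin d) (Fin d) ℂ) := by
        simp [Module.finrank_matrix, sq]
    _ ≤ _ := hle
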